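/- For any continuous surjective self-map T of a compact metric space X, h̃*(T) ≤ h*(T): the topological tail entropy defined via continuous partitions of unity is at most Misiurewicz's topological tail entropy. -/

import Mathlib

open MeasureTheory Filter Set

/-! ### Partitions of unity -/

/-- A finite partition of unity on `X`: a finite family of functions `X → [0,1]`
summing to `1` everywhere. -/
structure PartUnity (X : Type*) where
  n : ℕ
  f : Fin n → X → ℝ
  nonneg : ∀ i x, 0 ≤ f i x
  le_one : ∀ i x, f i x ≤ 1
  sum_one : ∀ x, ∑ i, f i x = 1

namespace PartUnity

variable {X Y : Type*}

/-- A continuous partition of unity. -/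
def Cont [TopologicalSpace X] (Φ : PartUnity X) : Prop := ∀ i, Continuous (Φ.f i)

/-- A measurable partition of unity. -/
def Meas [MeasurableSpace X] (Φ : PartUnity X) : Prop := ∀ i, Measurable (Φ.f i)

/-- A positive partition of unity. -/
def Pos (Φ : PartUnity X) : Prop := ∀ i x, 0 < Φ.f i x

/-- The join `Φ ∨ Ψ = {φ·ψ : φ ∈ Φ, ψ ∈ Ψ}` of two partitions of unity. -/
def join (Φ Ψ : PartUnity X) : PartUnity X where
  n := Φ.n * Ψ.n
  f k x := Φ.f (finProdFinEquiv.symm k).1 x * Ψ.f (finProdFinEquiv.symm k).2 x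
  nonneg k x := mul_nonneg (Φ.nonneg _ x) (Ψ.nonneg _ x)
  le_one k x := mul_le_one₀ (Φ.le_one _ x) (Ψ.nonneg _ x) (Ψ.le_one _ x)
  sum_one x := by
    rw [← Equiv.sum_comp (finProdFinEquiv : Fin Φ.n × Fin Ψ.n ≃ Fin (Φ.n * Ψ.n))
      (fun k => Φ.f (finProdFinEquiv.symm k).1 x * Ψ.f (finProdFinEquiv.symm k).2 x)]
    simp only [Equiv.symm_apply_apply]
    rw [Fintype.sum_prod_type]
    dsimp only
    rw [← Finset.sum_mul_sum, Φ.sum_one x, Ψ.sum_one x, one_mul]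

/-- Pull back a partition of unity by a map: `TΦ = {φ ∘ T : φ ∈ Φ}`. -/
def comp (Φ : PartUnity X) (T : Y → X) : PartUnity Y where
  n := Φ.n
  f i y := Φ.f i (T y)
  nonneg i y := Φ.nonneg i (T y)
  le_one i y := Φ.le_one i (T y)
  sum_one y := Φ.sum_one (T y)

/-- The trivial partition of unity `{1}`. -/
def triv (X : Type*) : PartUnity X where
  n := 1
  f _ _ := 1
  nonneg _ _ := zero_le_one
  le_one _ _ := le_rfl
  sum_one _ := by simp

/-- `dyn T Φ n` is the dynamical join `Φ₀ⁿ⁻¹ = ⋁_{i=0}^{n-1} TⁱΦ`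
(joined with a harmless trivial factor). -/
def dyn (T : X → X) (Φ : PartUnity X) : ℕ → PartUnity X
  | 0 => triv X
  | n + 1 => Φ.join ((dyn T Φ n).comp T)

/-- The product partition of unity `Φ ⊗ Ψ` on `X × Y`. -/
def prod (Φ : PartUnity X) (Ψ : PartUnity Y) : PartUnity (X × Y) where
  n := Φ.n * Ψ.n
  f k p := Φ.f (finProdFinEquiv.symm k).1 p.1 * Ψ.f (finProdFinEquiv.symm k).2 p.2
  nonneg k p := mul_nonneg (Φ.nonneg _ _) (Ψ.nonneg _ _)
  le_one k p := mul_le_one₀ (Φ.le_one _ _) (Ψ.nonneg _ _) (Ψ.le_one _ _)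
  sum_one p := by
    rw [← Equiv.sum_comp (finProdFinEquiv : Fin Φ.n × Fin Ψ.n ≃ Fin (Φ.n * Ψ.n))
      (fun k => Φ.f (finProdFinEquiv.symm k).1 p.1 * Ψ.f (finProdFinEquiv.symm k).2 p.2)]
    simp only [Equiv.symm_apply_apply]
    rw [Fintype.sum_prod_type]
    dsimp only
    rw [← Finset.sum_mul_sum, Φ.sum_one p.1, Ψ.sum_one p.2, one_mul]

/-- The diameter of a partition of unity: the maximum of the diameters of the
supports of its members. -/
noncomputable def diam [PseudoMetricSpace X] (Φ : PartUnity X) : ℝ :=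
  ⨆ i, Metric.diam (tsupport (Φ.f i))

end PartUnity

/-! ### Metric entropy via partitions of unity -/

variable {X Y : Type*}

/-- The static entropy `H̃_μ(Φ) = Σ_φ ( −μ(φ) log μ(φ) + μ(φ log φ) )`. -/
noncomputable def statEnt [MeasurableSpace X] (μ : Measure X) (Φ : PartUnity X) : ℝ :=
  ∑ i, (-((∫ x, Φ.f i x ∂μ) * Real.log (∫ x, Φ.f i x ∂μ)) +
    ∫ x, Φ.f i x * Real.log (Φ.f i x) ∂μ)

/-- The conditional measure `μ_ψ`, determined by `μ_ψ(φ) = μ(φψ)/μ(ψ)`. -/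
noncomputable def condMeas [MeasurableSpace X] (μ : Measure X) (ψ : X → ℝ) : Measure X :=
  (ENNReal.ofReal (∫ x, ψ x ∂μ))⁻¹ • μ.withDensity (fun x => ENNReal.ofReal (ψ x))

/-- The conditional static entropy `H̃_μ(Φ | Ψ) = Σ_ψ μ(ψ) H̃_{μ_ψ}(Φ)`
(terms with `μ(ψ) = 0` vanish since they are multiplied by `μ(ψ) = 0`). -/
noncomputable def condStatEnt [MeasurableSpace X] (μ : Measure X) (Φ Ψ : PartUnity X) : ℝ :=
  ∑ j, (∫ x, Ψ.f j x ∂μ) * statEnt (condMeas μ (Ψ.f j)) Φ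

/-- The local metric entropy `h̃_μ(T,Φ) = lim_n H̃_μ(Φ₀ⁿ⁻¹)/n`. -/
noncomputable def locEnt [MeasurableSpace X] (T : X → X) (μ : Measure X) (Φ : PartUnity X) : ℝ :=
  Filter.atTop.limsup fun n : ℕ => statEnt μ (PartUnity.dyn T Φ n) / (n : ℝ)

/-- The local conditional metric entropy `h̃_μ(T,Φ|Ψ) = lim_n H̃_μ(Φ₀ⁿ⁻¹|Ψ₀ⁿ⁻¹)/n`. -/
noncomputable def condLocEnt [MeasurableSpace X] (T : X → X) (μ : Measure X)
    (Φ Ψ : PartUnity X) : ℝ :=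
  Filter.atTop.limsup fun n : ℕ =>
    condStatEnt μ (PartUnity.dyn T Φ n) (PartUnity.dyn T Ψ n) / (n : ℝ)

/-- The metric entropy `h̃_μ(T)`: supremum of `h̃_μ(T,Φ)` over continuous
partitions of unity. -/
noncomputable def metEnt [TopologicalSpace X] [MeasurableSpace X]
    (T : X → X) (μ : Measure X) : EReal :=
  ⨆ Φ : {Φ : PartUnity X // Φ.Cont}, ((locEnt T μ Φ.1 : ℝ) : EReal)

/-! ### Topological entropy via partitions of unity -/

/-- The topological static entropy `H̃(Φ) = Σ_φ sup φ`. -/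
noncomputable def topStat (Φ : PartUnity X) : ℝ := ∑ i, ⨆ x, Φ.f i x

/-- The local topological entropy `h̃(T,Φ) = lim_n (1/n) log H̃(Φ₀ⁿ⁻¹)`. -/
noncomputable def topLocEnt (T : X → X) (Φ : PartUnity X) : ℝ :=
  Filter.atTop.limsup fun n : ℕ => Real.log (topStat (PartUnity.dyn T Φ n)) / (n : ℝ)

/-- The topological entropy `h̃_top(T)`: supremum of `h̃(T,Φ)` over continuous
partitions of unity. -/
noncomputable def topEnt [TopologicalSpace X] (T : X → X) : EReal :=
  ⨆ Φ : {Φ : PartUnity X // Φ.Cont}, ((topLocEnt T Φ.1 : ℝ) : EReal)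

/-! ### Classical Kolmogorov–Sinai entropy -/

/-- A finite Borel partition of `X` (indexed; atoms may be empty). -/
structure FinBorelPart (X : Type*) [MeasurableSpace X] where
  n : ℕ
  A : Fin n → Set X
  meas : ∀ i, MeasurableSet (A i)
  disj : ∀ i j, i ≠ j → Disjoint (A i) (A j)
  cover : ⋃ i, A i = Set.univ

/-- Local Kolmogorov–Sinai entropy `h_μ(T,𝒜) = lim_n (1/n) Σ_{A ∈ 𝒜₀ⁿ⁻¹} −μ(A) log μ(A)`. -/
noncomputable def ksLocEnt [MeasurableSpace X] (T : X → X) (μ : Measure X)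
    (P : FinBorelPart X) : ℝ :=
  Filter.atTop.limsup fun n : ℕ =>
    (∑ σ : Fin n → Fin P.n,
      Real.negMulLog (μ (⋂ i : Fin n, T^[(i : ℕ)] ⁻¹' P.A (σ i))).toReal) / (n : ℝ)

/-- The Kolmogorov–Sinai metric entropy `h_μ(T)`. -/
noncomputable def ksEnt [MeasurableSpace X] (T : X → X) (μ : Measure X) : EReal :=
  ⨆ P : FinBorelPart X, ((ksLocEnt T μ P : ℝ) : EReal)

/-! ### Classical topological entropy via open covers -/

/-- A finite open cover of `X`. -/
structure FinOpenCover (X : Type*) [TopologicalSpace X] where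
  n : ℕ
  U : Fin n → Set X
  opn : ∀ i, IsOpen (U i)
  cov : ⋃ i, U i = Set.univ

/-- The member `⋂_{i<n} T^{-i} U_{σ(i)}` of the dynamical refinement of a cover. -/
def dynSet (T : X → X) {m : ℕ} (U : Fin m → Set X) (n : ℕ) (σ : Fin n → Fin m) : Set X :=
  ⋂ i : Fin n, T^[(i : ℕ)] ⁻¹' U (σ i)

/-- Minimal cardinality of a subfamily of `V` covering `S`. -/
noncomputable def coverNum {α : Type*} [Fintype α] (V : α → Set X) (S : Set X) : ℕ :=
  sInf {k | ∃ t : Finset α, t.card = k ∧ S ⊆ ⋃ i ∈ t, V i}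

/-- The local classical topological entropy `h(T,𝒰)` of an open cover. -/
noncomputable def covLocEnt [TopologicalSpace X] (T : X → X) (C : FinOpenCover X) : ℝ :=
  Filter.atTop.limsup fun n : ℕ =>
    Real.log ((coverNum (fun σ : Fin n → Fin C.n => dynSet T C.U n σ) Set.univ : ℕ) : ℝ) / (n : ℝ)

/-- The classical topological entropy `h_top(T)` via open covers. -/
noncomputable def topEntCov [TopologicalSpace X] (T : X → X) : EReal :=
  ⨆ C : FinOpenCover X, ((covLocEnt T C : ℝ) : EReal)

/-! ### Misiurewicz topological tail entropy -/

/-- The local conditional topological entropy `h(𝒰|𝒱)` of two open covers. -/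
noncomputable def misCondLoc [TopologicalSpace X] (T : X → X) (CU CV : FinOpenCover X) : ℝ :=
  Filter.atTop.limsup fun n : ℕ =>
    Real.log (((⨆ τ : Fin n → Fin CV.n,
      coverNum (fun σ : Fin n → Fin CU.n => dynSet T CU.U n σ) (dynSet T CV.U n τ) : ℕ)) : ℝ) / (n : ℝ)

/-- The conditional topological entropy `h(T|𝒱) = sup_𝒰 h(𝒰|𝒱)`. -/
noncomputable def misCond [TopologicalSpace X] (T : X → X) (CV : FinOpenCover X) : EReal :=
  ⨆ CU : FinOpenCover X, ((misCondLoc T CU CV : ℝ) : EReal)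

/-- Misiurewicz's topological tail entropy `h*(T) = inf_𝒱 h(T|𝒱)`. -/
noncomputable def misTail [TopologicalSpace X] (T : X → X) : EReal :=
  ⨅ CV : FinOpenCover X, misCond T CV

/-! ### Topological tail entropy via partitions of unity -/

/-- `H̃(Φ|ψ) = Σ_φ sup_{supp ψ} φ`. -/
noncomputable def condTopStatPU [TopologicalSpace X] (Φ : PartUnity X) (ψ : X → ℝ) : ℝ :=
  ∑ i, ⨆ x ∈ tsupport ψ, Φ.f i x

/-- The weight set `D(Ψ) = {a : inf ψ ≤ a_ψ ≤ sup ψ, Σ a_ψ = 1}`. -/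
def weights (Ψ : PartUnity X) : Set (Fin Ψ.n → ℝ) :=
  {a | (∀ j, (⨅ x, Ψ.f j x) ≤ a j ∧ a j ≤ ⨆ x, Ψ.f j x) ∧ ∑ j, a j = 1}

/-- `H̃_n(Φ|Ψ) = sup_{a ∈ D(Ψ₀ⁿ⁻¹)} Σ_ψ a_ψ H̃(Φ₀ⁿ⁻¹|ψ)`. -/
noncomputable def tailStat [TopologicalSpace X] (T : X → X) (Φ Ψ : PartUnity X) (n : ℕ) : ℝ :=
  sSup {r | ∃ a ∈ weights (PartUnity.dyn T Ψ n),
    r = ∑ j, a j * condTopStatPU (PartUnity.dyn T Φ n) ((PartUnity.dyn T Ψ n).f j)}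

/-- The local conditional topological entropy `h̃(Φ|Ψ) = limsup_n (1/n) log H̃_n(Φ|Ψ)`. -/
noncomputable def tailLoc [TopologicalSpace X] (T : X → X) (Φ Ψ : PartUnity X) : ℝ :=
  Filter.atTop.limsup fun n : ℕ => Real.log (tailStat T Φ Ψ n) / (n : ℝ)

/-- The conditional topological entropy `h̃(T|Ψ) = sup_Φ h̃(Φ|Ψ)` over continuous `Φ`. -/
noncomputable def condTopEntPU [TopologicalSpace X] (T : X → X) (Ψ : PartUnity X) : EReal :=
  ⨆ Φ : {Φ : PartUnity X // Φ.Cont}, ((tailLoc T Φ.1 Ψ : ℝ) : EReal)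

/-- The topological tail entropy `h̃*(T) = inf_Ψ h̃(T|Ψ)` over continuous `Ψ`. -/
noncomputable def tailEntPU [TopologicalSpace X] (T : X → X) : EReal :=
  ⨅ Ψ : {Ψ : PartUnity X // Ψ.Cont}, condTopEntPU T Ψ.1

/-! ### Pressures -/

/-- The Birkhoff sum `S_n g = Σ_{i<n} g ∘ Tⁱ`. -/
def birkhoff (T : X → X) (g : X → ℝ) (n : ℕ) (x : X) : ℝ :=
  ∑ i ∈ Finset.range n, g (T^[i] x)

/-- The static pressure `P̃(T,g,Φ,n) = Σ_{φ ∈ Φ₀ⁿ⁻¹} sup (φ e^{S_n g})`. -/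
noncomputable def puPressStat (T : X → X) (g : X → ℝ) (Φ : PartUnity X) (n : ℕ) : ℝ :=
  ∑ i, ⨆ x, (PartUnity.dyn T Φ n).f i x * Real.exp (birkhoff T g n x)

/-- The local topological pressure `P̃_top(T,g,Φ) = lim_n (1/n) log P̃(T,g,Φ,n)`. -/
noncomputable def puLocPress (T : X → X) (g : X → ℝ) (Φ : PartUnity X) : ℝ :=
  Filter.atTop.limsup fun n : ℕ => Real.log (puPressStat T g Φ n) / (n : ℝ)

/-- The topological pressure `P̃_top(T,g)` via continuous partitions of unity. -/
noncomputable def puTopPress [TopologicalSpace X] (T : X → X) (g : X → ℝ) : EReal :=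
  ⨆ Φ : {Φ : PartUnity X // Φ.Cont}, ((puLocPress T g Φ.1 : ℝ) : EReal)

/-- The classical static pressure of an open cover:
`inf { Σ_{V ∈ 𝒱} sup_V e^{S_n g} : 𝒱 a subcover of 𝒰₀ⁿ⁻¹ }`. -/
noncomputable def covPressStat [TopologicalSpace X] (T : X → X) (g : X → ℝ)
    (C : FinOpenCover X) (n : ℕ) : ℝ :=
  sInf {r | ∃ t : Finset (Fin n → Fin C.n),
    (Set.univ ⊆ ⋃ σ ∈ t, dynSet T C.U n σ) ∧
    r = ∑ σ ∈ t, ⨆ x ∈ dynSet T C.U n σ, Real.exp (birkhoff T g n x)}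

/-- The local classical topological pressure of an open cover. -/
noncomputable def covLocPress [TopologicalSpace X] (T : X → X) (g : X → ℝ)
    (C : FinOpenCover X) : ℝ :=
  Filter.atTop.limsup fun n : ℕ => Real.log (covPressStat T g C n) / (n : ℝ)

/-- The classical topological pressure `P_top(T,g)` via open covers. -/
noncomputable def topPress [TopologicalSpace X] (T : X → X) (g : X → ℝ) : EReal :=
  ⨆ C : FinOpenCover X, ((covLocPress T g C : ℝ) : EReal)

/-! ### Topological tail pressure -/

/-- `P̃_n(T,g,Φ|Ψ) = sup_{a ∈ D(Ψ₀ⁿ⁻¹)} Σ_ψ a_ψ Σ_φ sup_{supp ψ} (φ e^{S_n g})`. -/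
noncomputable def tailPressStat [TopologicalSpace X] (T : X → X) (g : X → ℝ)
    (Φ Ψ : PartUnity X) (n : ℕ) : ℝ :=
  sSup {r | ∃ a ∈ weights (PartUnity.dyn T Ψ n),
    r = ∑ j, a j * ∑ i, ⨆ x ∈ tsupport ((PartUnity.dyn T Ψ n).f j),
      (PartUnity.dyn T Φ n).f i x * Real.exp (birkhoff T g n x)}

/-- The local topological tail pressure `P̃(T,g,Φ|Ψ) = limsup_n (1/n) log P̃_n(T,g,Φ|Ψ)`. -/
noncomputable def tailLocPress [TopologicalSpace X] (T : X → X) (g : X → ℝ)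
    (Φ Ψ : PartUnity X) : ℝ :=
  Filter.atTop.limsup fun n : ℕ => Real.log (tailPressStat T g Φ Ψ n) / (n : ℝ)

/-- The conditional topological pressure `P̃(T,g|Ψ) = sup_Φ P̃(T,g,Φ|Ψ)` over continuous `Φ`. -/
noncomputable def condTopPressPU [TopologicalSpace X] (T : X → X) (g : X → ℝ)
    (Ψ : PartUnity X) : EReal :=
  ⨆ Φ : {Φ : PartUnity X // Φ.Cont}, ((tailLocPress T g Φ.1 Ψ : ℝ) : EReal)

/-- The topological tail pressure `P̃*(T,g) = inf_Ψ P̃(T,g|Ψ)` over continuous `Ψ`. -/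
noncomputable def puTailPress [TopologicalSpace X] (T : X → X) (g : X → ℝ) : EReal :=
  ⨅ Ψ : {Ψ : PartUnity X // Ψ.Cont}, condTopPressPU T g Ψ.1

/-! ### Classical topological tail pressure (Li–Chen–Cheng) -/

/-- The Bowen ball `B(x,ε,n) = {y : d(Tⁱx,Tⁱy) < ε for all 0 ≤ i < n}`. -/
def bowenBall [PseudoMetricSpace X] (T : X → X) (x : X) (ε : ℝ) (n : ℕ) : Set X :=
  {y | ∀ i < n, dist (T^[i] x) (T^[i] y) < ε}

/-- `E` is `(n,δ)`-separated: distinct points `y,z ∈ E` satisfy `d(Tⁱy,Tⁱz) > δ`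
for some `0 ≤ i < n`. -/
def IsSep [PseudoMetricSpace X] (T : X → X) (n : ℕ) (δ : ℝ) (E : Finset X) : Prop :=
  ∀ y ∈ E, ∀ z ∈ E, y ≠ z → ∃ i < n, δ < dist (T^[i] y) (T^[i] z)

/-- `P_n(T,g,δ,ε) = sup_x sup { Σ_{y∈E} e^{S_n g(y)} : E (n,δ)-separated ⊆ B(x,ε,n) }`. -/
noncomputable def sepPress [PseudoMetricSpace X] (T : X → X) (g : X → ℝ)
    (n : ℕ) (δ ε : ℝ) : ℝ :=
  ⨆ x : X, sSup {r | ∃ E : Finset X, ↑E ⊆ bowenBall T x ε n ∧ IsSep T n δ E ∧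
    r = ∑ y ∈ E, Real.exp (birkhoff T g n y)}

/-- The classical topological tail pressure
`P*(T,g) = lim_{ε→0} lim_{δ→0} limsup_n (1/n) log P_n(T,g,δ,ε)`
(the inner limits are monotone, hence given by `inf_ε sup_δ`). -/
noncomputable def tailPress [PseudoMetricSpace X] (T : X → X) (g : X → ℝ) : EReal :=
  ⨅ ε : {ε : ℝ // 0 < ε}, ⨆ δ : {δ : ℝ // 0 < δ},
    Filter.atTop.limsup fun n : ℕ => ((Real.log (sepPress T g n δ.1 ε.1) / (n : ℝ) : ℝ) : EReal)



/-! ### Auxiliary lemmas -/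

section AuxSup

variable {X : Type*}

lemma rsup_le {S : Set X} {f : X → ℝ} {a : ℝ} (ha : 0 ≤ a) (h : ∀ x ∈ S, f x ≤ a) :
    (⨆ x ∈ S, f x) ≤ a :=
  Real.iSup_le (fun x => Real.iSup_le (fun hx => h x hx) ha) ha

lemma rsup_nonneg {S : Set X} {f : X → ℝ} (h : ∀ x, 0 ≤ f x) : 0 ≤ ⨆ x ∈ S, f x :=
  Real.iSup_nonneg fun x => Real.iSup_nonneg fun _ => h x

lemma le_rsup {S : Set X} {f : X → ℝ} (hb : ∀ x, f x ≤ 1) {x0 : X} (hx : x0 ∈ S) :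
    f x0 ≤ ⨆ x ∈ S, f x := by
  have hbdd : BddAbove (Set.range fun x => ⨆ _ : x ∈ S, f x) := by
    refine ⟨1, ?_⟩
    rintro _ ⟨x, rfl⟩
    exact Real.iSup_le (fun _ => hb x) zero_le_one
  have h1 : f x0 ≤ ⨆ _ : x0 ∈ S, f x0 :=
    le_ciSup (f := fun _ : x0 ∈ S => f x0) ⟨f x0, by rintro _ ⟨_, rfl⟩; exact le_rfl⟩ hx
  exact h1.trans (le_ciSup hbdd x0)

lemma rsup_le_sum_subcover {α : Type*} {A : Set X} {f : X → ℝ}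
    (h0 : ∀ x, 0 ≤ f x) (hb : ∀ x, f x ≤ 1) {t : Finset α} {W : α → Set X}
    (hA : A ⊆ ⋃ σ ∈ t, W σ) :
    (⨆ x ∈ A, f x) ≤ ∑ σ ∈ t, ⨆ x ∈ A ∩ W σ, f x := by
  refine rsup_le (Finset.sum_nonneg fun σ _ => rsup_nonneg h0) (fun x hx => ?_)
  obtain ⟨σ, hσt, hσ⟩ := Set.mem_iUnion₂.1 (hA hx)
  calc f x ≤ ⨆ y ∈ A ∩ W σ, f y := le_rsup hb ⟨hx, hσ⟩
    _ ≤ ∑ σ ∈ t, ⨆ y ∈ A ∩ W σ, f y :=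
        Finset.single_le_sum (f := fun σ => ⨆ y ∈ A ∩ W σ, f y)
          (fun σ _ => rsup_nonneg h0) hσt

end AuxSup

section AuxPU

variable {X : Type*}

lemma PartUnity.pos_n [Nonempty X] (Φ : PartUnity X) : 0 < Φ.n := by
  by_contra h
  push_neg at h
  haveI : IsEmpty (Fin Φ.n) := by
    rw [Nat.le_zero.1 h]
    infer_instance
  have := Φ.sum_one (Classical.arbitrary X)
  rw [Finset.univ_eq_empty, Finset.sum_empty] at this
  exact zero_ne_one this

lemma dyn_succ_apply (T : X → X) (Φ : PartUnity X) (n : ℕ)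
    (k : Fin (Φ.n * (PartUnity.dyn T Φ n).n)) (x : X) :
    (PartUnity.dyn T Φ (n + 1)).f k x =
      Φ.f (finProdFinEquiv.symm k).1 x *
        (PartUnity.dyn T Φ n).f (finProdFinEquiv.symm k).2 (T x) := rfl

/-- Key product bound for dynamical joins of partitions of unity. -/
lemma dyn_sum_sup_le (T : X → X) (Φ : PartUnity X) :
    ∀ (n : ℕ) (R : X → X) (S : Set X),
      (∑ k, ⨆ x ∈ S, (PartUnity.dyn T Φ n).f k (R x)) ≤
        ∏ i ∈ Finset.range n, (∑ j, ⨆ x ∈ S, Φ.f j (T^[i] (R x))) := by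
  intro n
  induction n with
  | zero =>
    intro R S
    rw [Finset.prod_range_zero]
    have : (∑ k : Fin 1, ⨆ x ∈ S, (1 : ℝ)) ≤ 1 := by
      rw [Fin.sum_univ_one]
      exact rsup_le zero_le_one (fun _ _ => le_rfl)
    exact this
  | succ n ih =>
    intro R S
    have hsum : (∑ k, ⨆ x ∈ S, (PartUnity.dyn T Φ (n + 1)).f k (R x)) =
        ∑ i : Fin Φ.n, ∑ i' : Fin (PartUnity.dyn T Φ n).n, ⨆ x ∈ S,
          Φ.f i (R x) * (PartUnity.dyn T Φ n).f i' (T (R x)) := by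
      calc (∑ k, ⨆ x ∈ S, (PartUnity.dyn T Φ (n + 1)).f k (R x))
          = ∑ p : Fin Φ.n × Fin (PartUnity.dyn T Φ n).n, ⨆ x ∈ S,
              Φ.f p.1 (R x) * (PartUnity.dyn T Φ n).f p.2 (T (R x)) :=
            Equiv.sum_comp
              (finProdFinEquiv.symm :
                Fin (Φ.n * (PartUnity.dyn T Φ n).n) ≃ Fin Φ.n × Fin (PartUnity.dyn T Φ n).n)
              (fun p => ⨆ x ∈ S, Φ.f p.1 (R x) * (PartUnity.dyn T Φ n).f p.2 (T (R x)))
        _ = ∑ i : Fin Φ.n, ∑ i' : Fin (PartUnity.dyn T Φ n).n, ⨆ x ∈ S,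
              Φ.f i (R x) * (PartUnity.dyn T Φ n).f i' (T (R x)) :=
            Fintype.sum_prod_type _
    rw [hsum, Finset.prod_range_succ']
    have hAnn : (0:ℝ) ≤ ∑ j : Fin Φ.n, ⨆ x ∈ S, Φ.f j (R x) :=
      Finset.sum_nonneg fun j _ => rsup_nonneg fun x => Φ.nonneg _ _
    have hBnn : (0:ℝ) ≤ ∑ i' : Fin (PartUnity.dyn T Φ n).n,
        ⨆ x ∈ S, (PartUnity.dyn T Φ n).f i' (T (R x)) :=
      Finset.sum_nonneg fun i' _ => rsup_nonneg fun x => (PartUnity.dyn T Φ n).nonneg _ _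
    calc (∑ i : Fin Φ.n, ∑ i' : Fin (PartUnity.dyn T Φ n).n, ⨆ x ∈ S,
            Φ.f i (R x) * (PartUnity.dyn T Φ n).f i' (T (R x)))
        ≤ ∑ i : Fin Φ.n, ∑ i' : Fin (PartUnity.dyn T Φ n).n,
            (⨆ x ∈ S, Φ.f i (R x)) * (⨆ x ∈ S, (PartUnity.dyn T Φ n).f i' (T (R x))) := by
          refine Finset.sum_le_sum fun i _ => Finset.sum_le_sum fun i' _ => ?_
          refine rsup_le (mul_nonneg (rsup_nonneg fun x => Φ.nonneg _ _)
            (rsup_nonneg fun x => (PartUnity.dyn T Φ n).nonneg _ _)) (fun x hx => ?_)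
          exact mul_le_mul
            (le_rsup (f := fun y => Φ.f i (R y)) (fun y => Φ.le_one _ _) hx)
            (le_rsup (f := fun y => (PartUnity.dyn T Φ n).f i' (T (R y)))
              (fun y => (PartUnity.dyn T Φ n).le_one _ _) hx)
            ((PartUnity.dyn T Φ n).nonneg _ _)
            (rsup_nonneg fun y => Φ.nonneg _ _)
      _ = (∑ i : Fin Φ.n, ⨆ x ∈ S, Φ.f i (R x)) *
            (∑ i' : Fin (PartUnity.dyn T Φ n).n,
              ⨆ x ∈ S, (PartUnity.dyn T Φ n).f i' (T (R x))) :=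
          (Finset.sum_mul_sum _ _ _ _).symm
      _ ≤ (∑ j : Fin Φ.n, ⨆ x ∈ S, Φ.f j (T^[0] (R x))) *
            (∏ i ∈ Finset.range n, ∑ j : Fin Φ.n, ⨆ x ∈ S, Φ.f j (T^[i + 1] (R x))) := by
          refine mul_le_mul (le_of_eq rfl) ?_ hBnn ?_
          · exact ih (T ∘ R) S
          · simpa using hAnn
      _ = (∏ i ∈ Finset.range n, ∑ j : Fin Φ.n, ⨆ x ∈ S, Φ.f j (T^[i + 1] (R x))) *
            (∑ j : Fin Φ.n, ⨆ x ∈ S, Φ.f j (T^[0] (R x))) := mul_comm _ _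

/-- Uniform continuity: on sets with small image, the sum of sups is close to 1. -/
lemma exists_delta_sum_sup_le [MetricSpace X] [CompactSpace X] [Nonempty X]
    (Φ : PartUnity X) (hΦ : Φ.Cont) {ε : ℝ} (hε : 0 < ε) :
    ∃ δ > 0, ∀ (g : X → X) (S : Set X),
      (∀ x ∈ S, ∀ y ∈ S, dist (g x) (g y) < δ) →
      (∑ j, ⨆ x ∈ S, Φ.f j (g x)) ≤ 1 + ε := by
  have hn : 0 < Φ.n := Φ.pos_n
  have hεn : 0 < ε / Φ.n := div_pos hε (by exact_mod_cast hn)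
  set F : X → (Fin Φ.n → ℝ) := fun x j => Φ.f j x with hF
  have hFc : Continuous F := continuous_pi hΦ
  have hFu : UniformContinuous F := CompactSpace.uniformContinuous_of_continuous hFc
  obtain ⟨δ, hδ, hδ'⟩ := Metric.uniformContinuous_iff.1 hFu (ε / Φ.n) hεn
  refine ⟨δ, hδ, fun g S hS => ?_⟩
  rcases S.eq_empty_or_nonempty with rfl | ⟨x0, hx0⟩
  · have : (∑ j, ⨆ x ∈ (∅ : Set X), Φ.f j (g x)) ≤ 0 := by
      refine Finset.sum_nonpos fun j _ => rsup_le le_rfl (fun x hx => absurd hx (Set.notMem_empty x))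
    linarith
  · have hterm : ∀ j, (⨆ x ∈ S, Φ.f j (g x)) ≤ Φ.f j (g x0) + ε / Φ.n := by
      intro j
      refine rsup_le (add_nonneg (Φ.nonneg _ _) hεn.le) (fun x hx => ?_)
      have h1 : dist (F (g x)) (F (g x0)) < ε / Φ.n := hδ' (hS x hx x0 hx0)
      have h2 : dist (F (g x) j) (F (g x0) j) ≤ dist (F (g x)) (F (g x0)) :=
        dist_le_pi_dist (F (g x)) (F (g x0)) j
      rw [Real.dist_eq] at h2
      have := abs_le.1 (h2.trans h1.le)
      simp only [hF] at this
      linarith [this.2]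
    calc (∑ j, ⨆ x ∈ S, Φ.f j (g x)) ≤ ∑ j, (Φ.f j (g x0) + ε / Φ.n) :=
          Finset.sum_le_sum fun j _ => hterm j
      _ = 1 + ε := by
          rw [Finset.sum_add_distrib, Φ.sum_one, Finset.sum_const, Finset.card_univ,
            Fintype.card_fin, nsmul_eq_mul]
          have : (Φ.n : ℝ) ≠ 0 := by exact_mod_cast hn.ne'
          field_simp

end AuxPU

section AuxDynSet

variable {X : Type*}

lemma dynSet_zero (T : X → X) {m : ℕ} (U : Fin m → Set X) (τ : Fin 0 → Fin m) :
    dynSet T U 0 τ = Set.univ := by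
  simp [dynSet]

lemma dynSet_cons (T : X → X) {m n : ℕ} (U : Fin m → Set X) (a : Fin m)
    (τ : Fin n → Fin m) :
    dynSet T U (n + 1) (Fin.cons a τ) = U a ∩ T ⁻¹' dynSet T U n τ := by
  ext x
  simp only [dynSet, Set.mem_iInter, Set.mem_inter_iff, Set.mem_preimage]
  rw [Fin.forall_fin_succ]
  simp [Fin.cons_zero, Fin.cons_succ, Function.iterate_succ_apply, Fin.val_succ]

lemma mem_dynSet_iff (T : X → X) {m n : ℕ} (U : Fin m → Set X) (τ : Fin n → Fin m) (x : X) :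
    x ∈ dynSet T U n τ ↔ ∀ i : Fin n, T^[(i : ℕ)] x ∈ U (τ i) := Set.mem_iInter

lemma exists_mem_dynSet [TopologicalSpace X] (T : X → X) (C : FinOpenCover X) (n : ℕ) (x : X) :
    ∃ τ : Fin n → Fin C.n, x ∈ dynSet T C.U n τ := by
  have h : ∀ i : Fin n, ∃ m, T^[(i : ℕ)] x ∈ C.U m := by
    intro i
    have := C.cov
    have hx : T^[(i : ℕ)] x ∈ ⋃ m, C.U m := this ▸ Set.mem_univ _
    exact Set.mem_iUnion.1 hx
  choose τ hτ using h
  exact ⟨τ, Set.mem_iInter.2 hτ⟩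

/-- Supports of the dynamical join of a subordinate partition of unity
are contained in elements of the dynamical refinement of the cover. -/
lemma dyn_tsupport_subset [TopologicalSpace X] (T : X → X) (hT : Continuous T)
    {m : ℕ} (V : Fin m → Set X) (Ψ : PartUnity X) (ρ : Fin Ψ.n → Fin m)
    (hsub : ∀ i, tsupport (Ψ.f i) ⊆ V (ρ i)) :
    ∀ (n : ℕ) (j : Fin (PartUnity.dyn T Ψ n).n),
      ∃ τ : Fin n → Fin m, tsupport ((PartUnity.dyn T Ψ n).f j) ⊆ dynSet T V n τ := by
  intro n
  induction n with
  | zero =>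
    intro j
    exact ⟨Fin.elim0, by rw [dynSet_zero]; exact Set.subset_univ _⟩
  | succ n ih =>
    intro j
    obtain ⟨τ', hτ'⟩ := ih (finProdFinEquiv.symm j).2
    set a := (finProdFinEquiv.symm j).1
    set b := (finProdFinEquiv.symm j).2
    refine ⟨Fin.cons (ρ a) τ', ?_⟩
    rw [dynSet_cons]
    have hfun : (PartUnity.dyn T Ψ (n + 1)).f j =
        fun x => Ψ.f a x * (PartUnity.dyn T Ψ n).f b (T x) := rfl
    have hclosed : IsClosed (tsupport (Ψ.f a) ∩ T ⁻¹' tsupport ((PartUnity.dyn T Ψ n).f b)) :=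
      (isClosed_tsupport _).inter ((isClosed_tsupport _).preimage hT)
    have hsupp : Function.support ((PartUnity.dyn T Ψ (n + 1)).f j) ⊆
        tsupport (Ψ.f a) ∩ T ⁻¹' tsupport ((PartUnity.dyn T Ψ n).f b) := by
      intro x hx
      rw [hfun, Function.mem_support] at hx
      constructor
      · exact subset_closure (Function.mem_support.2 (left_ne_zero_of_mul hx))
      · exact subset_closure (Function.mem_support.2 (right_ne_zero_of_mul hx))
    have h1 : tsupport ((PartUnity.dyn T Ψ (n + 1)).f j) ⊆
        tsupport (Ψ.f a) ∩ T ⁻¹' tsupport ((PartUnity.dyn T Ψ n).f b) :=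
      closure_minimal hsupp hclosed
    exact h1.trans (Set.inter_subset_inter (hsub a) (Set.preimage_mono hτ'))

lemma coverNum_spec {α : Type*} [Fintype α] (V : α → Set X) (S : Set X)
    (h : S ⊆ ⋃ i, V i) :
    ∃ t : Finset α, t.card = coverNum V S ∧ S ⊆ ⋃ i ∈ t, V i := by
  have hne : {k | ∃ t : Finset α, t.card = k ∧ S ⊆ ⋃ i ∈ t, V i}.Nonempty :=
    ⟨Finset.univ.card, Finset.univ, rfl, by simpa using h⟩
  obtain ⟨t, ht, hcov⟩ := Nat.sInf_mem hne
  exact ⟨t, ht, hcov⟩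

lemma coverNum_le_card {α : Type*} [Fintype α] (V : α → Set X) (S : Set X)
    (h : S ⊆ ⋃ i, V i) : coverNum V S ≤ Fintype.card α :=
  Nat.sInf_le ⟨Finset.univ, by simp [Finset.card_univ], by simpa using h⟩

lemma one_le_coverNum {α : Type*} [Fintype α] (V : α → Set X) (S : Set X)
    (h : S ⊆ ⋃ i, V i) (hS : S.Nonempty) : 1 ≤ coverNum V S := by
  obtain ⟨t, ht, hcov⟩ := coverNum_spec V S h
  rcases Nat.eq_zero_or_pos (coverNum V S) with h0 | h1
  · exfalso
    rw [h0, Finset.card_eq_zero] at ht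
    subst ht
    obtain ⟨x, hx⟩ := hS
    simpa using hcov hx
  · exact h1

end AuxDynSet

lemma EReal.le_of_forall_pos_le_add' {x y : EReal}
    (h : ∀ η : ℝ, 0 < η → x ≤ y + (η : EReal)) : x ≤ y := by
  induction y with
  | bot =>
    have := h 1 one_pos
    simpa using this
  | coe r =>
    induction x with
    | bot => exact bot_le
    | coe s =>
      have hsr : ∀ η : ℝ, 0 < η → s ≤ r + η := by
        intro η hη
        have := h η hη
        rw [← EReal.coe_add] at this
        exact_mod_cast this
      refine EReal.coe_le_coe_iff.2 ?_
      by_contra hlt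
      push_neg at hlt
      have := hsr ((s - r) / 2) (by linarith)
      linarith
    | top =>
      exfalso
      have := h 1 one_pos
      rw [← EReal.coe_add, top_le_iff] at this
      exact EReal.coe_ne_top _ this
  | top => exact le_top

/-- `h̃*(T) ≤ h*(T)`: the topological tail entropy via continuous
partitions of unity is at most Misiurewicz's topological tail entropy. -/
theorem tailEntPU_le_misTail {X : Type*} [MetricSpace X] [CompactSpace X] [Nonempty X]
    [MeasurableSpace X] [BorelSpace X]
    (T : X → X) (hT : Continuous T) (hTsurj : Function.Surjective T) :
    tailEntPU T ≤ misTail T := by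
  refine le_iInf fun CV => ?_
  -- a continuous partition of unity subordinate to `CV`
  obtain ⟨f, hf⟩ := PartitionOfUnity.exists_isSubordinate (isClosed_univ (X := X))
    CV.U CV.opn (by rw [CV.cov])
  set Ψ : PartUnity X :=
    { n := CV.n
      f := fun i x => f i x
      nonneg := fun i x => f.nonneg i x
      le_one := fun i x => f.le_one i x
      sum_one := fun x => by
        have h := f.sum_eq_one (Set.mem_univ x)
        rwa [finsum_eq_sum_of_fintype] at h } with hΨdef
  have hΨc : Ψ.Cont := fun i => (f i).continuous
  have hΨsub : ∀ i : Fin Ψ.n, tsupport (Ψ.f i) ⊆ CV.U ((fun i => i) i) := fun i => hf i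
  refine le_trans (iInf_le _ (⟨Ψ, hΨc⟩ : {Ψ : PartUnity X // Ψ.Cont})) ?_
  refine iSup_le ?_
  rintro ⟨Φ, hΦc⟩
  refine EReal.le_of_forall_pos_le_add' fun η hη => ?_
  -- choose `ε` with `log (1+ε) = η/2`
  set ε : ℝ := Real.exp (η / 2) - 1 with hεdef
  have hexp : 1 + ε = Real.exp (η / 2) := by rw [hεdef]; ring
  have hε : 0 < ε := by
    have h := Real.add_one_le_exp (η / 2)
    rw [hεdef]; linarith
  obtain ⟨δ, hδ, hδ'⟩ := exists_delta_sum_sup_le Φ hΦc hε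
  -- finite cover by `δ/2`-balls
  obtain ⟨s, hs⟩ := isCompact_univ.elim_finite_subcover
    (fun c : X => Metric.ball c (δ / 2)) (fun _ => Metric.isOpen_ball)
    (fun x _ => Set.mem_iUnion.2 ⟨x, Metric.mem_ball_self (by linarith)⟩)
  set CU : FinOpenCover X :=
    { n := s.card
      U := fun i => Metric.ball ((s.equivFin.symm i : X)) (δ / 2)
      opn := fun _ => Metric.isOpen_ball
      cov := by
        refine Set.eq_univ_of_forall fun x => ?_
        obtain ⟨c, hc, hxc⟩ := Set.mem_iUnion₂.1 (hs (Set.mem_univ x))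
        exact Set.mem_iUnion.2 ⟨s.equivFin ⟨c, hc⟩, by simpa using hxc⟩ } with hCUdef
  have hsmall : ∀ (i : Fin CU.n) (x y : X), x ∈ CU.U i → y ∈ CU.U i → dist x y < δ := by
    intro i x y hx hy
    rw [Metric.mem_ball] at hx hy
    have h3 := dist_triangle x ((s.equivFin.symm i : X)) y
    rw [dist_comm ((s.equivFin.symm i : X)) y] at h3
    linarith
  have hCU1 : 0 < CU.n := by
    by_contra h
    push_neg at h
    haveI : IsEmpty (Fin CU.n) := by rw [Nat.le_zero.1 h]; infer_instance
    have hmem : (Classical.arbitrary X) ∈ ⋃ i, CU.U i := CU.cov ▸ Set.mem_univ _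
    rw [Set.iUnion_of_empty] at hmem
    exact hmem
  -- the sequence appearing in `misCondLoc T CU CV`
  set A : ℕ → ℝ := fun n => Real.log
    (((⨆ τ : Fin n → Fin CV.n,
      coverNum (fun σ : Fin n → Fin CU.n => dynSet T CU.U n σ) (dynSet T CV.U n τ) : ℕ)) : ℝ) /
        (n : ℝ) with hAdef
  have hmis : misCondLoc T CU CV = Filter.atTop.limsup A := rfl
  have hM1 : ∀ n : ℕ, 1 ≤ (⨆ τ : Fin n → Fin CV.n,
      coverNum (fun σ : Fin n → Fin CU.n => dynSet T CU.U n σ) (dynSet T CV.U n τ)) := by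
    intro n
    obtain ⟨τ0, hτ0⟩ := exists_mem_dynSet T CV n (Classical.arbitrary X)
    have h1 : 1 ≤ coverNum (fun σ : Fin n → Fin CU.n => dynSet T CU.U n σ)
        (dynSet T CV.U n τ0) :=
      one_le_coverNum _ _ (fun x _ => Set.mem_iUnion.2 (exists_mem_dynSet T CU n x)) ⟨_, hτ0⟩
    exact h1.trans (le_ciSup (f := fun τ : Fin n → Fin CV.n =>
      coverNum (fun σ : Fin n → Fin CU.n => dynSet T CU.U n σ) (dynSet T CV.U n τ))
      (Set.Finite.bddAbove (Set.finite_range _)) τ0)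
  have hMcard : ∀ n : ℕ, (⨆ τ : Fin n → Fin CV.n,
      coverNum (fun σ : Fin n → Fin CU.n => dynSet T CU.U n σ) (dynSet T CV.U n τ)) ≤
        CU.n ^ n := by
    intro n
    obtain ⟨τ0, _⟩ := exists_mem_dynSet T CV n (Classical.arbitrary X)
    haveI : Nonempty (Fin n → Fin CV.n) := ⟨τ0⟩
    refine ciSup_le fun τ => ?_
    have h2 := coverNum_le_card (fun σ : Fin n → Fin CU.n => dynSet T CU.U n σ)
      (dynSet T CV.U n τ) (fun x _ => Set.mem_iUnion.2 (exists_mem_dynSet T CU n x))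
    simpa [Fintype.card_fun] using h2
  have hA0 : ∀ n, 0 ≤ A n := fun n =>
    div_nonneg (Real.log_nonneg (by exact_mod_cast hM1 n)) (Nat.cast_nonneg n)
  have hAb : ∀ n, A n ≤ Real.log CU.n := by
    intro n
    rcases Nat.eq_zero_or_pos n with rfl | hn
    · have h0 : A 0 = 0 := by simp [hAdef]
      rw [h0]
      exact Real.log_nonneg (by exact_mod_cast hCU1)
    · have h1 : Real.log ((((⨆ τ : Fin n → Fin CV.n,
          coverNum (fun σ : Fin n → Fin CU.n => dynSet T CU.U n σ) (dynSet T CV.U n τ)) : ℕ)) : ℝ) ≤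
          Real.log (((CU.n : ℝ)) ^ n) := by
        refine Real.log_le_log (by exact_mod_cast hM1 n) ?_
        exact_mod_cast hMcard n
      rw [Real.log_pow] at h1
      have hnpos : (0:ℝ) < n := by exact_mod_cast hn
      rw [hAdef]
      rw [div_le_iff₀ hnpos]
      calc Real.log _ ≤ (n : ℝ) * Real.log CU.n := h1
        _ = Real.log CU.n * (n:ℝ) := mul_comm _ _
  have hAbdd : Filter.atTop.IsBoundedUnder (· ≤ ·) A :=
    Filter.isBoundedUnder_of ⟨Real.log CU.n, hAb⟩
  -- the key estimates
  have hkey : ∀ n : ℕ, 1 ≤ tailStat T Φ Ψ n ∧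
      (1 ≤ n → Real.log (tailStat T Φ Ψ n) / (n : ℝ) ≤ A n + η / 2) := by
    intro n
    set M : ℕ := ⨆ τ : Fin n → Fin CV.n,
      coverNum (fun σ : Fin n → Fin CU.n => dynSet T CU.U n σ) (dynSet T CV.U n τ) with hMdef
    set B : ℝ := (M : ℝ) * (1 + ε) ^ n with hBdef
    have hεp : (0:ℝ) ≤ (1 + ε) ^ n := by positivity
    have hpow1 : (1:ℝ) ≤ (1 + ε) ^ n := one_le_pow₀ (by linarith)
    have hB1 : (1:ℝ) ≤ B := by
      have hM1' : (1:ℝ) ≤ (M : ℝ) := by exact_mod_cast hM1 n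
      nlinarith
    have hub : ∀ r ∈ {r | ∃ a ∈ weights (PartUnity.dyn T Ψ n),
        r = ∑ j, a j * condTopStatPU (PartUnity.dyn T Φ n) ((PartUnity.dyn T Ψ n).f j)},
        r ≤ B := by
      rintro r ⟨a, ⟨hab, hasum⟩, rfl⟩
      have ha0 : ∀ j, 0 ≤ a j := fun j =>
        le_trans (le_ciInf fun x => (PartUnity.dyn T Ψ n).nonneg j x) (hab j).1
      have hcle : ∀ j, condTopStatPU (PartUnity.dyn T Φ n) ((PartUnity.dyn T Ψ n).f j) ≤ B := by
        intro j
        obtain ⟨τj, hτj⟩ := dyn_tsupport_subset T hT CV.U Ψ (fun i => i) hΨsub n j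
        obtain ⟨t, htcard, htcov⟩ := coverNum_spec
          (fun σ : Fin n → Fin CU.n => dynSet T CU.U n σ) (dynSet T CV.U n τj)
          (fun x _ => Set.mem_iUnion.2 (exists_mem_dynSet T CU n x))
        have hσbound : ∀ σ : Fin n → Fin CU.n,
            (∑ i, ⨆ x ∈ tsupport ((PartUnity.dyn T Ψ n).f j) ∩ dynSet T CU.U n σ,
              (PartUnity.dyn T Φ n).f i x) ≤ (1 + ε) ^ n := by
          intro σ
          have h2 := dyn_sum_sup_le T Φ n id
            (tsupport ((PartUnity.dyn T Ψ n).f j) ∩ dynSet T CU.U n σ)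
          simp only [id] at h2
          refine h2.trans ?_
          have hfac : ∀ i ∈ Finset.range n,
              (∑ jj, ⨆ x ∈ tsupport ((PartUnity.dyn T Ψ n).f j) ∩ dynSet T CU.U n σ,
                Φ.f jj (T^[i] x)) ≤ 1 + ε := by
            intro i hi
            rw [Finset.mem_range] at hi
            refine hδ' (T^[i]) _ (fun x hx y hy => ?_)
            exact hsmall (σ ⟨i, hi⟩) _ _
              ((Set.mem_iInter.1 hx.2) ⟨i, hi⟩) ((Set.mem_iInter.1 hy.2) ⟨i, hi⟩)
          calc (∏ i ∈ Finset.range n,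
                ∑ jj, ⨆ x ∈ tsupport ((PartUnity.dyn T Ψ n).f j) ∩ dynSet T CU.U n σ,
                  Φ.f jj (T^[i] x))
              ≤ ∏ _i ∈ Finset.range n, (1 + ε) :=
                Finset.prod_le_prod (fun i _ => Finset.sum_nonneg fun jj _ =>
                  rsup_nonneg fun x => Φ.nonneg _ _) hfac
            _ = (1 + ε) ^ n := by rw [Finset.prod_const, Finset.card_range]
        have hsub2 : tsupport ((PartUnity.dyn T Ψ n).f j) ⊆ ⋃ σ ∈ t, dynSet T CU.U n σ :=
          hτj.trans htcov
        have hsplit : condTopStatPU (PartUnity.dyn T Φ n) ((PartUnity.dyn T Ψ n).f j) ≤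
            ∑ _σ ∈ t, (1 + ε) ^ n := by
          calc condTopStatPU (PartUnity.dyn T Φ n) ((PartUnity.dyn T Ψ n).f j)
              = ∑ i, ⨆ x ∈ tsupport ((PartUnity.dyn T Ψ n).f j),
                  (PartUnity.dyn T Φ n).f i x := rfl
            _ ≤ ∑ i, ∑ σ ∈ t, ⨆ x ∈ tsupport ((PartUnity.dyn T Ψ n).f j) ∩ dynSet T CU.U n σ,
                  (PartUnity.dyn T Φ n).f i x :=
                Finset.sum_le_sum fun i _ => rsup_le_sum_subcover
                  (fun x => (PartUnity.dyn T Φ n).nonneg i x)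
                  (fun x => (PartUnity.dyn T Φ n).le_one i x) hsub2
            _ = ∑ σ ∈ t, ∑ i, ⨆ x ∈ tsupport ((PartUnity.dyn T Ψ n).f j) ∩ dynSet T CU.U n σ,
                  (PartUnity.dyn T Φ n).f i x := Finset.sum_comm
            _ ≤ ∑ _σ ∈ t, (1 + ε) ^ n := Finset.sum_le_sum fun σ _ => hσbound σ
        refine hsplit.trans ?_
        rw [Finset.sum_const, htcard, nsmul_eq_mul]
        have hMN : ((coverNum (fun σ : Fin n → Fin CU.n => dynSet T CU.U n σ)
            (dynSet T CV.U n τj) : ℕ) : ℝ) ≤ (M : ℝ) := by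
          exact_mod_cast le_ciSup (f := fun τ : Fin n → Fin CV.n =>
            coverNum (fun σ : Fin n → Fin CU.n => dynSet T CU.U n σ) (dynSet T CV.U n τ))
            (Set.Finite.bddAbove (Set.finite_range _)) τj
        exact mul_le_mul_of_nonneg_right hMN hεp
      calc (∑ j, a j * condTopStatPU (PartUnity.dyn T Φ n) ((PartUnity.dyn T Ψ n).f j))
          ≤ ∑ j, a j * B :=
            Finset.sum_le_sum fun j _ => mul_le_mul_of_nonneg_left (hcle j) (ha0 j)
        _ = B := by rw [← Finset.sum_mul, hasum, one_mul]
    have hone : (1:ℝ) ≤ tailStat T Φ Ψ n := by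
      set x0 := Classical.arbitrary X with hx0def
      set a : Fin (PartUnity.dyn T Ψ n).n → ℝ := fun j => (PartUnity.dyn T Ψ n).f j x0 with hadef
      have hmem : a ∈ weights (PartUnity.dyn T Ψ n) := by
        constructor
        · intro j
          constructor
          · exact ciInf_le ⟨0, by rintro _ ⟨x, rfl⟩; exact (PartUnity.dyn T Ψ n).nonneg j x⟩ x0
          · exact le_ciSup ⟨1, by rintro _ ⟨x, rfl⟩; exact (PartUnity.dyn T Ψ n).le_one j x⟩ x0
        · exact (PartUnity.dyn T Ψ n).sum_one x0
      have hterm : ∀ j, a j ≤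
          a j * condTopStatPU (PartUnity.dyn T Φ n) ((PartUnity.dyn T Ψ n).f j) := by
        intro j
        rcases eq_or_lt_of_le ((PartUnity.dyn T Ψ n).nonneg j x0) with h0 | h0
        · rw [hadef]
          simp [← h0]
        · have hx0mem : x0 ∈ tsupport ((PartUnity.dyn T Ψ n).f j) :=
            subset_closure (by rw [Function.mem_support]; exact ne_of_gt h0)
          have h1 : (1:ℝ) ≤ condTopStatPU (PartUnity.dyn T Φ n) ((PartUnity.dyn T Ψ n).f j) := by
            calc (1:ℝ) = ∑ i, (PartUnity.dyn T Φ n).f i x0 :=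
                  ((PartUnity.dyn T Φ n).sum_one x0).symm
              _ ≤ ∑ i, ⨆ x ∈ tsupport ((PartUnity.dyn T Ψ n).f j),
                    (PartUnity.dyn T Φ n).f i x :=
                  Finset.sum_le_sum fun i _ =>
                    le_rsup (fun x => (PartUnity.dyn T Φ n).le_one i x) hx0mem
          exact le_mul_of_one_le_right h0.le h1
      have hr : (1:ℝ) ≤
          ∑ j, a j * condTopStatPU (PartUnity.dyn T Φ n) ((PartUnity.dyn T Ψ n).f j) := by
        calc (1:ℝ) = ∑ j, a j := ((PartUnity.dyn T Ψ n).sum_one x0).symm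
          _ ≤ _ := Finset.sum_le_sum fun j _ => hterm j
      exact hr.trans (le_csSup ⟨B, hub⟩ ⟨a, hmem, rfl⟩)
    refine ⟨hone, fun hn => ?_⟩
    have hstat : tailStat T Φ Ψ n ≤ B := Real.sSup_le hub (by linarith)
    have hlg : Real.log (1 + ε) = η / 2 := by rw [hexp, Real.log_exp]
    have hlog : Real.log (tailStat T Φ Ψ n) ≤ Real.log (M : ℝ) + (n : ℝ) * (η / 2) := by
      have h1 : Real.log (tailStat T Φ Ψ n) ≤ Real.log B :=
        Real.log_le_log (by linarith) hstat
      have hM0 : ((M:ℝ)) ≠ 0 := by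
        have : (1:ℝ) ≤ (M:ℝ) := by exact_mod_cast hM1 n
        linarith
      rw [hBdef, Real.log_mul hM0 (by positivity), Real.log_pow, hlg] at h1
      exact h1
    have hnpos : (0:ℝ) < (n : ℝ) := by exact_mod_cast hn
    have hA : A n = Real.log (M : ℝ) / (n : ℝ) := rfl
    rw [hA]
    rw [div_le_iff₀ hnpos] at *
    calc Real.log (tailStat T Φ Ψ n) ≤ Real.log (M : ℝ) + (n : ℝ) * (η / 2) := hlog
      _ = (Real.log (M : ℝ) / (n : ℝ) + η / 2) * (n : ℝ) := by field_simp
  -- limsup step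
  have hu0 : ∀ n : ℕ, 0 ≤ Real.log (tailStat T Φ Ψ n) / (n : ℝ) := fun n =>
    div_nonneg (Real.log_nonneg (hkey n).1) (Nat.cast_nonneg n)
  have hcob : Filter.atTop.IsCoboundedUnder (· ≤ ·)
      (fun n : ℕ => Real.log (tailStat T Φ Ψ n) / (n : ℝ)) :=
    Filter.isCoboundedUnder_le_of_le Filter.atTop hu0
  have h2 : ∀ᶠ n : ℕ in Filter.atTop, A n < Filter.atTop.limsup A + η / 2 :=
    Filter.eventually_lt_of_limsup_lt (lt_add_of_pos_right _ (by linarith)) hAbdd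
  have hev : ∀ᶠ n : ℕ in Filter.atTop,
      Real.log (tailStat T Φ Ψ n) / (n : ℝ) ≤ Filter.atTop.limsup A + η / 2 + η / 2 := by
    filter_upwards [h2, Filter.eventually_ge_atTop 1] with n h2n h1n
    have h3 := (hkey n).2 h1n
    linarith
  have hlimsup : tailLoc T Φ Ψ ≤ Filter.atTop.limsup A + η / 2 + η / 2 :=
    Filter.limsup_le_of_le hcob hev
  have hmisle : ((Filter.atTop.limsup A : ℝ) : EReal) ≤ misCond T CV := by
    have h4 : ((misCondLoc T CU CV : ℝ) : EReal) ≤ misCond T CV :=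
      le_iSup (fun CU' : FinOpenCover X => ((misCondLoc T CU' CV : ℝ) : EReal)) CU
    rwa [hmis] at h4
  calc ((tailLoc T Φ Ψ : ℝ) : EReal)
      ≤ ((Filter.atTop.limsup A + η / 2 + η / 2 : ℝ) : EReal) := EReal.coe_le_coe_iff.2 hlimsup
    _ = ((Filter.atTop.limsup A : ℝ) : EReal) + ((η : ℝ) : EReal) := by
        have h5 : Filter.atTop.limsup A + η / 2 + η / 2 = Filter.atTop.limsup A + η := by ring
        rw [h5, EReal.coe_add]
    _ ≤ misCond T CV + ((η : ℝ) : EReal) := add_le_add_left hmisle _
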